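/- arXiv:2109.13787 — 7 statements merged into one kernel-verified Lean document; each statement's English description precedes it below -/
import Mathlib

section
/- Let Ω be a set, let 𝒢 be a σ-algebra on Ω, and let f : Ω → ℝ be any function. A function Y : Ω → ℝ is measurable with respect to the σ-algebra 𝒢 ⊔ σ(f) (the smallest σ-algebra containing 𝒢 and making f Borel-measurable) if and only if there exists a function h : Ω × ℝ → ℝ, measurable with respect to the product σ-algebra of 𝒢 and the Borel σ-algebra on ℝ, such that Y(ω) = h(ω, f(ω)) for all ω ∈ Ω. -/
open MeasurableSpace Set

/-- Doob–Dynkin factorization for real-valued functions: a function measurable w.r.t. the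
σ-algebra pulled back along `φ` factors measurably through `φ`. -/
theorem doob_dynkin_real {α β : Type*} {m : MeasurableSpace β} {φ : α → β} {Y : α → ℝ}
    (hY : @Measurable α ℝ (m.comap φ) _ Y) :
    ∃ h : β → ℝ, Measurable h ∧ ∀ a, Y a = h (φ a) := by
  classical
  -- choose measurable sets representing the sublevel sets at rational levels
  have hA : ∀ q : ℚ, ∃ A : Set β, MeasurableSet A ∧ φ ⁻¹' A = {a | Y a ≤ (q : ℝ)} := by
    intro q
    have : @MeasurableSet α (m.comap φ) (Y ⁻¹' Iic (q : ℝ)) := hY measurableSet_Iic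
    rcases this with ⟨A, hAm, hA⟩
    exact ⟨A, hAm, by simpa [Set.preimage, Iic] using hA⟩
  choose A hAm hApre using hA
  -- monotone regularization
  set B : ℚ → Set β := fun q => ⋂ (r : ℚ) (_ : q ≤ r), A r with hB
  have hBm : ∀ q, MeasurableSet (B q) := fun q =>
    MeasurableSet.iInter fun r => MeasurableSet.iInter fun _ => hAm r
  have hBmono : ∀ {q r : ℚ}, q ≤ r → B q ⊆ B r := by
    intro q r hqr b hb
    simp only [hB, mem_iInter] at hb ⊢
    intro s hs
    exact hb s (hqr.trans hs)
  have hBpre : ∀ q : ℚ, φ ⁻¹' B q = {a | Y a ≤ (q : ℝ)} := by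
    intro q
    ext a
    simp only [hB, preimage_iInter, mem_iInter, mem_preimage, mem_setOf_eq]
    constructor
    · intro h
      have := h q le_rfl
      rw [← mem_preimage, hApre] at this
      exact this
    · intro h r hr
      rw [← mem_preimage, hApre]
      exact h.trans (by exact_mod_cast hr)
  -- the candidate function
  set S : β → Set ℝ := fun b => ((↑) : ℚ → ℝ) '' {q : ℚ | b ∈ B q} with hS
  set Good : Set β := (⋃ q : ℚ, B q) \ (⋂ q : ℚ, B q) with hGood
  have hGoodm : MeasurableSet Good :=
    (MeasurableSet.iUnion fun q => hBm q).diff (MeasurableSet.iInter fun q => hBm q)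
  set h : β → ℝ := fun b => if b ∈ Good then sInf (S b) else 0 with hdef
  -- basic facts about S b for b ∈ Good
  have hSne : ∀ b ∈ Good, (S b).Nonempty := by
    rintro b ⟨hbU, -⟩
    rcases mem_iUnion.1 hbU with ⟨q, hq⟩
    exact ⟨(q : ℝ), ⟨q, hq, rfl⟩⟩
  have hSbdd : ∀ b ∈ Good, BddBelow (S b) := by
    rintro b ⟨-, hbE⟩
    rw [mem_iInter] at hbE
    push_neg at hbE
    rcases hbE with ⟨q0, hq0⟩
    refine ⟨(q0 : ℝ), ?_⟩
    rintro x ⟨q, hq, rfl⟩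
    by_contra hlt
    push_neg at hlt
    have : (q : ℝ) ≤ (q0 : ℝ) := le_of_lt hlt
    exact hq0 (hBmono (by exact_mod_cast this) hq)
  -- measurability of h
  have hhm : Measurable h := by
    apply measurable_of_Iio
    intro c
    have key : h ⁻¹' Iio c =
        (Good ∩ ⋃ (q : ℚ) (_ : (q : ℝ) < c), B q) ∪ (Goodᶜ ∩ {_b : β | (0 : ℝ) < c}) := by
      ext b
      by_cases hb : b ∈ Good
      · simp only [mem_preimage, mem_Iio, hdef, if_pos hb, mem_union, mem_inter_iff, hb,
          true_and, mem_compl_iff, not_true, false_and, or_false, mem_iUnion, if_true]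
        rw [csInf_lt_iff (hSbdd b hb) (hSne b hb)]
        constructor
        · rintro ⟨x, ⟨q, hq, rfl⟩, hx⟩
          exact ⟨q, hx, hq⟩
        · rintro ⟨q, hqc, hq⟩
          exact ⟨(q : ℝ), ⟨q, hq, rfl⟩, hqc⟩
      · simp [hdef, if_neg hb, hb, mem_Iio]
    rw [key]
    refine MeasurableSet.union (hGoodm.inter ?_) (hGoodm.compl.inter ?_)
    · exact MeasurableSet.iUnion fun q => MeasurableSet.iUnion fun _ => hBm q
    · by_cases hc : (0 : ℝ) < c
      · simpa [hc] using MeasurableSet.univ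
      · simpa [hc] using MeasurableSet.empty
  refine ⟨h, hhm, fun a => ?_⟩
  -- φ a is in the good set
  have hmem : ∀ q : ℚ, φ a ∈ B q ↔ Y a ≤ (q : ℝ) := by
    intro q
    rw [← mem_preimage, hBpre]
    rfl
  have hGa : φ a ∈ Good := by
    constructor
    · rcases exists_rat_gt (Y a) with ⟨q, hq⟩
      exact mem_iUnion.2 ⟨q, (hmem q).2 hq.le⟩
    · rcases exists_rat_lt (Y a) with ⟨q, hq⟩
      rw [mem_iInter]
      push_neg
      exact ⟨q, fun hmem' => absurd ((hmem q).1 hmem') (not_le.2 hq)⟩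
  have : h (φ a) = sInf (S (φ a)) := by rw [hdef]; simp [hGa]
  rw [this]
  -- compute the infimum
  refine le_antisymm ?_ ?_
  · refine le_csInf (hSne _ hGa) ?_
    rintro x ⟨q, hq, rfl⟩
    exact (hmem q).1 hq
  · refine le_of_forall_pos_le_add fun ε hε => ?_
    rcases exists_rat_btwn (lt_add_of_pos_right (Y a) hε) with ⟨q, hq1, hq2⟩
    calc sInf (S (φ a)) ≤ (q : ℝ) :=
          csInf_le (hSbdd _ hGa) ⟨q, (hmem q).2 hq1.le, rfl⟩
      _ ≤ Y a + ε := hq2.le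

/-- A process is measurable w.r.t. the σ-algebra generated by `G` and the signal `f`
iff it is a `G ⊗ Borel`-measurable function of `ω` and the signal value `f ω`. -/
theorem meyer_field_representation {Ω : Type*} (G : MeasurableSpace Ω) (f : Ω → ℝ)
    (Y : Ω → ℝ) :
    @Measurable Ω ℝ (G ⊔ MeasurableSpace.comap f (borel ℝ)) (borel ℝ) Y ↔
      ∃ h : Ω × ℝ → ℝ,
        @Measurable (Ω × ℝ) ℝ (G.prod (borel ℝ)) (borel ℝ) h ∧ ∀ ω, Y ω = h (ω, f ω) := by
  have hkey : (G.prod (borel ℝ)).comap (fun ω => (ω, f ω)) =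
      G ⊔ MeasurableSpace.comap f (borel ℝ) := by
    rw [MeasurableSpace.prod, MeasurableSpace.comap_sup, MeasurableSpace.comap_comp,
      MeasurableSpace.comap_comp]
    congr 1
    · exact MeasurableSpace.comap_id
  constructor
  · intro hY
    rw [← hkey] at hY
    obtain ⟨h, hm, heq⟩ := @doob_dynkin_real Ω (Ω × ℝ) (G.prod (borel ℝ)) _ Y hY
    exact ⟨h, hm, heq⟩
  · rintro ⟨h, hm, heq⟩
    have hφ : @Measurable Ω (Ω × ℝ) (G ⊔ MeasurableSpace.comap f (borel ℝ))
        (G.prod (borel ℝ)) (fun ω => (ω, f ω)) := by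
      rw [← hkey]
      exact Measurable.of_comap_le le_rfl
    have : Y = fun ω => h (ω, f ω) := funext heq
    rw [this]
    exact hm.comp hφ
end

section
/- Let κ be a finite measure on a measurable space E and let η : E → ℝ be measurable with η(e) ≥ −1 for κ-a.e. e, κ({e : η(e) > 0}) > 0 and κ({e : η(e) < 0}) > 0. Define a as the essential supremum of e ↦ −1/η(e) with respect to the restriction of κ to {η > 0}, and b as the essential infimum of e ↦ −1/η(e) with respect to the restriction of κ to {η < 0}. Then a and b are real numbers with a ≤ 0 and b ≥ 1, and the set {φ ∈ ℝ : 1 + φ·η(e) ≥ 0 for κ-a.e. e} equals the closed interval [a, b]; in particular [0,1] ⊆ [a, b]. -/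
open MeasureTheory

/-- The admissible range of investment fractions keeping wealth nonnegative across jumps
is the closed interval `[a, b]` with `a` the essential sup of `-1/η` on `{η > 0}` and
`b` the essential inf of `-1/η` on `{η < 0}`; both are (finite) real numbers,
`a ≤ 0 ≤ 1 ≤ b`, so in particular `[0,1] ⊆ [a,b]`. -/
theorem admissible_fraction_interval {E : Type*} [MeasurableSpace E]
    (κ : Measure E) [IsFiniteMeasure κ]
    (η : E → ℝ) (hη : Measurable η)
    (hge : ∀ᵐ e ∂κ, -1 ≤ η e)
    (hpos : 0 < κ {e | 0 < η e}) (hneg : 0 < κ {e | η e < 0}) :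
    ∃ a b : ℝ,
      essSup (fun e => ((-1 / η e : ℝ) : EReal)) (κ.restrict {e | 0 < η e}) = (a : EReal) ∧
      essInf (fun e => ((-1 / η e : ℝ) : EReal)) (κ.restrict {e | η e < 0}) = (b : EReal) ∧
      a ≤ 0 ∧ 1 ≤ b ∧
      {φ : ℝ | ∀ᵐ e ∂κ, 0 ≤ 1 + φ * η e} = Set.Icc a b ∧
      Set.Icc (0 : ℝ) 1 ⊆ Set.Icc a b := by
  set Sp := {e : E | 0 < η e} with hSpdef
  set Sn := {e : E | η e < 0} with hSndef
  have hmSp : MeasurableSet Sp := measurableSet_lt measurable_const hη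
  have hmSn : MeasurableSet Sn := measurableSet_lt hη measurable_const
  set f : E → EReal := fun e => ((-1 / η e : ℝ) : EReal) with hfdef
  set A := essSup f (κ.restrict Sp) with hAdef
  set B := essInf f (κ.restrict Sn) with hBdef
  -- A ≤ 0
  have hA0 : A ≤ (0 : EReal) := by
    apply essSup_le_of_ae_le (hfbdd := by isBoundedDefault)
    filter_upwards [ae_restrict_mem hmSp] with e he
    have he' : 0 < η e := he
    have h1 : (-1 / η e : ℝ) ≤ 0 := div_nonpos_of_nonpos_of_nonneg (by norm_num) he'.le
    show ((-1 / η e : ℝ) : EReal) ≤ (0 : EReal)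
    exact_mod_cast h1
  -- A is bounded below
  have hexn : ∃ n : ℕ, κ {e | 1 / (n + 1 : ℝ) ≤ η e} ≠ 0 := by
    by_contra h
    push_neg at h
    have hsub : Sp ⊆ ⋃ n : ℕ, {e | 1 / (n + 1 : ℝ) ≤ η e} := by
      intro e he
      have he' : 0 < η e := he
      obtain ⟨n, hn⟩ := exists_nat_one_div_lt he'
      exact Set.mem_iUnion.mpr ⟨n, hn.le⟩
    exact absurd (measure_mono_null hsub (measure_iUnion_null h)) hpos.ne'
  obtain ⟨n, hn⟩ := hexn
  have hTsub : {e | 1 / (n + 1 : ℝ) ≤ η e} ⊆ Sp := by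
    intro e he
    have : (0 : ℝ) < 1 / (n + 1 : ℝ) := by positivity
    exact lt_of_lt_of_le this he
  have hAbot : ((-(n + 1) : ℝ) : EReal) ≤ A := by
    by_contra hlt
    push_neg at hlt
    have hae := ae_lt_of_essSup_lt hlt
    rw [ae_restrict_iff' hmSp] at hae
    have hnull : ∀ᵐ e ∂κ, e ∉ {e | 1 / (n + 1 : ℝ) ≤ η e} := by
      filter_upwards [hae] with e h3 heT
      have hpe : 0 < η e := hTsub heT
      have heT' : 1 / (n + 1 : ℝ) ≤ η e := heT
      have h4 : 1 / η e ≤ (n + 1 : ℝ) := by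
        rw [div_le_iff₀ hpe]
        have hn1 : (0 : ℝ) < (n + 1 : ℝ) := by positivity
        rw [div_le_iff₀ hn1] at heT'
        nlinarith
      have h5 : (-(n + 1) : ℝ) ≤ -1 / η e := by rw [neg_div]; linarith
      have h6 : f e < ((-(n + 1) : ℝ) : EReal) := h3 (hTsub heT)
      have h7 : ((-(n + 1) : ℝ) : EReal) ≤ f e := by
        show ((-(n + 1) : ℝ) : EReal) ≤ ((-1 / η e : ℝ) : EReal)
        exact_mod_cast h5
      exact absurd h6 h7.not_gt
    rw [ae_iff] at hnull
    simp only [not_not] at hnull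
    exact hn hnull
  have hAtop : A ≠ ⊤ := ne_top_of_le_ne_top (by simp) hA0
  have hAbot' : A ≠ ⊥ := fun h => by
    rw [h] at hAbot
    exact (EReal.coe_ne_bot _) (le_bot_iff.mp hAbot)
  set a := A.toReal with hadef
  have hAa : A = (a : EReal) := (EReal.coe_toReal hAtop hAbot').symm
  -- 1 ≤ B
  have hB1 : ((1 : ℝ) : EReal) ≤ B := by
    apply le_essInf_of_ae_le (hfbdd := by isBoundedDefault)
    filter_upwards [ae_restrict_mem hmSn, ae_restrict_of_ae hge] with e he hge'
    have he' : η e < 0 := he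
    have h1 : (1 : ℝ) ≤ -1 / η e := by
      rw [le_div_iff_of_neg he']
      linarith
    show ((1 : ℝ) : EReal) ≤ ((-1 / η e : ℝ) : EReal)
    exact_mod_cast h1
  -- B bounded above
  have hexm : ∃ m : ℕ, κ {e | η e ≤ -(1 / (m + 1 : ℝ))} ≠ 0 := by
    by_contra h
    push_neg at h
    have hsub : Sn ⊆ ⋃ m : ℕ, {e | η e ≤ -(1 / (m + 1 : ℝ))} := by
      intro e he
      have he' : η e < 0 := he
      obtain ⟨m, hm⟩ := exists_nat_one_div_lt (neg_pos.mpr he')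
      exact Set.mem_iUnion.mpr ⟨m, by simp only [Set.mem_setOf_eq]; linarith⟩
    exact absurd (measure_mono_null hsub (measure_iUnion_null h)) hneg.ne'
  obtain ⟨m, hm⟩ := hexm
  have hT'sub : {e | η e ≤ -(1 / (m + 1 : ℝ))} ⊆ Sn := by
    intro e he
    have h0 : (0 : ℝ) < 1 / (m + 1 : ℝ) := by positivity
    have he' : η e ≤ -(1 / (m + 1 : ℝ)) := he
    show η e < 0
    linarith
  have hBtop : B ≤ (((m + 1 : ℝ)) : EReal) := by
    by_contra hlt
    push_neg at hlt
    have hae := ae_lt_of_lt_essInf hlt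
    rw [ae_restrict_iff' hmSn] at hae
    have hnull : ∀ᵐ e ∂κ, e ∉ {e | η e ≤ -(1 / (m + 1 : ℝ))} := by
      filter_upwards [hae] with e h3 heT
      have hne : η e < 0 := hT'sub heT
      have heT' : η e ≤ -(1 / (m + 1 : ℝ)) := heT
      have hm1 : (0 : ℝ) < (m + 1 : ℝ) := by positivity
      have h4 : -1 / η e ≤ (m + 1 : ℝ) := by
        rw [div_le_iff_of_neg hne]
        have : 1 / (m + 1 : ℝ) ≤ -η e := by linarith
        rw [div_le_iff₀ hm1] at this
        nlinarith
      have h6 : (((m + 1 : ℝ)) : EReal) < f e := h3 (hT'sub heT)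
      have h7 : f e ≤ (((m + 1 : ℝ)) : EReal) := by
        show ((-1 / η e : ℝ) : EReal) ≤ (((m + 1 : ℝ)) : EReal)
        exact_mod_cast h4
      exact absurd h6 h7.not_gt
    rw [ae_iff] at hnull
    simp only [not_not] at hnull
    exact hm hnull
  have hBbot : B ≠ ⊥ := fun h => by
    rw [h] at hB1
    exact (EReal.coe_ne_bot 1) (le_bot_iff.mp hB1)
  have hBtop' : B ≠ ⊤ := ne_top_of_le_ne_top (EReal.coe_ne_top _) hBtop
  set b := B.toReal with hbdef
  have hBb : B = (b : EReal) := (EReal.coe_toReal hBtop' hBbot).symm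
  have ha0 : a ≤ 0 := by
    rw [hAa] at hA0
    exact_mod_cast hA0
  have hb1 : (1 : ℝ) ≤ b := by
    rw [hBb] at hB1
    exact_mod_cast hB1
  have hset : {φ : ℝ | ∀ᵐ e ∂κ, 0 ≤ 1 + φ * η e} = Set.Icc a b := by
    ext φ
    simp only [Set.mem_setOf_eq, Set.mem_Icc]
    constructor
    · intro h
      constructor
      · have hle : A ≤ ((φ : ℝ) : EReal) := by
          apply essSup_le_of_ae_le (hfbdd := by isBoundedDefault)
          filter_upwards [ae_restrict_mem hmSp, ae_restrict_of_ae h] with e he hh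
          have he' : 0 < η e := he
          have h2 : -1 / η e ≤ φ := by rw [div_le_iff₀ he']; linarith
          show ((-1 / η e : ℝ) : EReal) ≤ ((φ : ℝ) : EReal)
          exact_mod_cast h2
        rw [hAa] at hle
        exact_mod_cast hle
      · have hle : ((φ : ℝ) : EReal) ≤ B := by
          apply le_essInf_of_ae_le (hfbdd := by isBoundedDefault)
          filter_upwards [ae_restrict_mem hmSn, ae_restrict_of_ae h] with e he hh
          have he' : η e < 0 := he
          have h2 : φ ≤ -1 / η e := by rw [le_div_iff_of_neg he']; linarith
          show ((φ : ℝ) : EReal) ≤ ((-1 / η e : ℝ) : EReal)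
          exact_mod_cast h2
        rw [hBb] at hle
        exact_mod_cast hle
    · rintro ⟨h1, h2⟩
      have H1 : ∀ᵐ e ∂κ, e ∈ Sp → f e ≤ A :=
        (ae_restrict_iff' hmSp).mp (ae_le_essSup)
      have H2 : ∀ᵐ e ∂κ, e ∈ Sn → B ≤ f e :=
        (ae_restrict_iff' hmSn).mp (ae_essInf_le)
      filter_upwards [H1, H2] with e he1 he2
      rcases lt_trichotomy (η e) 0 with hlt | heq | hgt
      · have h3 := he2 hlt
        rw [hBb] at h3
        have h3' : ((b : ℝ) : EReal) ≤ ((-1 / η e : ℝ) : EReal) := h3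
        have hb' : (b : ℝ) ≤ -1 / η e := by exact_mod_cast h3'
        have h4 : φ ≤ -1 / η e := le_trans h2 hb'
        rw [le_div_iff_of_neg hlt] at h4
        linarith
      · simp [heq]
      · have h3 := he1 hgt
        rw [hAa] at h3
        have h3' : ((-1 / η e : ℝ) : EReal) ≤ ((a : ℝ) : EReal) := h3
        have ha' : -1 / η e ≤ a := by exact_mod_cast h3'
        have h4 : -1 / η e ≤ φ := le_trans ha' h1
        rw [div_le_iff₀ hgt] at h4
        linarith
  exact ⟨a, b, hAa, hBb, ha0, hb1, hset, Set.Icc_subset_Icc ha0 hb1⟩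
end

section
/- Let α ∈ (0,1) and U(x) = x^{1−α}/(1−α). Let μ_d, r ∈ ℝ, σ > 0, let ν be a finite measure on a measurable space E and let η : E → ℝ be measurable with η(e) ≥ −1 for ν-a.e. e. Assume the function e ↦ (1 + max(η(e),0))^{1−α} is ν-integrable. Then the function F(φ) = φ(μ_d − r) − (1/2)αφ²σ² + ∫_E (U(1 + φη(e)) − U(1)) ν(de) is real-valued and continuous on [0,1], and there exists a unique φ* ∈ [0,1] such that F(φ*) = max_{φ∈[0,1]} F(φ). -/
open MeasureTheory Real

/-- The power utility function `U(x) = x^(1-α)/(1-α)` (real power). -/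
noncomputable def U (α x : ℝ) : ℝ := x ^ (1 - α) / (1 - α)

private lemma strictConvexOn_const_mul {c : ℝ} (hc : 0 < c) {s : Set ℝ} {f : ℝ → ℝ}
    (hf : StrictConvexOn ℝ s f) : StrictConvexOn ℝ s fun x => c * f x := by
  refine ⟨hf.1, fun x hx y hy hxy a b ha hb hab => ?_⟩
  have h := hf.2 hx hy hxy ha hb hab
  simp only [smul_eq_mul] at h ⊢
  nlinarith

/-- For `α ∈ (0,1)`, the no-signal functional `F` is real-valued (its integrand is
integrable) and continuous on `[0,1]`, and it has a unique maximizer `φ* ∈ [0,1]`. -/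
theorem exists_unique_maximizer_no_signal {E : Type*} [MeasurableSpace E]
    (α : ℝ) (hα : α ∈ Set.Ioo (0 : ℝ) 1)
    (μd r σ : ℝ) (hσ : 0 < σ)
    (ν : Measure E) [IsFiniteMeasure ν]
    (η : E → ℝ) (hη : Measurable η) (hηge : ∀ᵐ e ∂ν, -1 ≤ η e)
    (hint : Integrable (fun e => (1 + max (η e) 0) ^ (1 - α)) ν)
    (F : ℝ → ℝ)
    (hF : F = fun φ => φ * (μd - r) - (1 / 2) * α * φ ^ 2 * σ ^ 2
        + ∫ e, (U α (1 + φ * η e) - U α 1) ∂ν) :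
    (∀ φ ∈ Set.Icc (0 : ℝ) 1, Integrable (fun e => U α (1 + φ * η e) - U α 1) ν) ∧
    ContinuousOn F (Set.Icc 0 1) ∧
    ∃! φs : ℝ, φs ∈ Set.Icc (0 : ℝ) 1 ∧ ∀ φ ∈ Set.Icc (0 : ℝ) 1, F φ ≤ F φs := by
  obtain ⟨hα0, hα1⟩ := hα
  have hβ0 : 0 < 1 - α := by linarith
  have hβ1 : 1 - α < 1 := by linarith
  -- a.e. bounds on the base
  have hbase : ∀ φ ∈ Set.Icc (0:ℝ) 1, ∀ᵐ e ∂ν,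
      0 ≤ 1 + φ * η e ∧ 1 + φ * η e ≤ 1 + max (η e) 0 := by
    intro φ hφ
    filter_upwards [hηge] with e he
    refine ⟨by nlinarith [hφ.1, hφ.2], ?_⟩
    have : φ * η e ≤ max (η e) 0 := by
      rcases le_or_gt 0 (η e) with h | h
      · exact le_trans (by nlinarith [hφ.2]) (le_max_left _ _)
      · exact le_trans (mul_nonpos_of_nonneg_of_nonpos hφ.1 h.le) (le_max_right _ _)
    linarith
  -- dominating function
  set bound : E → ℝ := fun e => ((1 + max (η e) 0) ^ (1 - α) + 1) / (1 - α) with hbnd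
  have hbound_int : Integrable bound ν := (hint.add (integrable_const 1)).div_const _
  have hnormle : ∀ φ ∈ Set.Icc (0:ℝ) 1, ∀ᵐ e ∂ν,
      ‖U α (1 + φ * η e) - U α 1‖ ≤ bound e := by
    intro φ hφ
    filter_upwards [hbase φ hφ] with e he
    obtain ⟨h0, h1⟩ := he
    have hpow0 : 0 ≤ (1 + φ * η e) ^ (1 - α) := Real.rpow_nonneg h0 _
    have hpowle : (1 + φ * η e) ^ (1 - α) ≤ (1 + max (η e) 0) ^ (1 - α) :=
      Real.rpow_le_rpow h0 h1 hβ0.le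
    have hdiff : U α (1 + φ * η e) - U α 1 = ((1 + φ * η e) ^ (1 - α) - 1) / (1 - α) := by
      simp only [U, Real.one_rpow]; ring
    rw [Real.norm_eq_abs, hdiff, abs_div, abs_of_pos hβ0, hbnd]
    have habs : |(1 + φ * η e) ^ (1 - α) - 1| ≤ (1 + max (η e) 0) ^ (1 - α) + 1 :=
      abs_le.mpr ⟨by nlinarith [Real.rpow_nonneg (le_trans h0 h1) (1 - α)], by linarith⟩
    exact div_le_div_of_nonneg_right habs hβ0.le |>.trans_eq rfl
  -- measurability of the integrand
  have hmeas : ∀ φ : ℝ, Measurable fun e => U α (1 + φ * η e) - U α 1 := by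
    intro φ
    have h1 : Measurable fun e => 1 + φ * η e := (hη.const_mul φ).const_add 1
    have h2 : Measurable fun e => (1 + φ * η e) ^ (1 - α) :=
      (Real.continuous_rpow_const hβ0.le).measurable.comp h1
    exact (h2.div_const _).sub measurable_const
  -- integrability of the integrand
  have hInt : ∀ φ ∈ Set.Icc (0:ℝ) 1, Integrable (fun e => U α (1 + φ * η e) - U α 1) ν :=
    fun φ hφ => Integrable.mono' hbound_int (hmeas φ).aestronglyMeasurable (hnormle φ hφ)
  -- the integral term
  set G : ℝ → ℝ := fun φ => ∫ e, (U α (1 + φ * η e) - U α 1) ∂ν with hG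
  -- continuity
  have hGcont : ContinuousOn G (Set.Icc 0 1) := by
    refine continuousOn_of_dominated (fun φ _ => (hmeas φ).aestronglyMeasurable)
      (fun φ hφ => hnormle φ hφ) hbound_int ?_
    filter_upwards with e
    apply Continuous.continuousOn
    have h1 : Continuous fun φ : ℝ => 1 + φ * η e :=
      continuous_const.add (continuous_id.mul continuous_const)
    have h2 : Continuous fun φ : ℝ => (1 + φ * η e) ^ (1 - α) :=
      (Real.continuous_rpow_const hβ0.le).comp h1
    exact (h2.div_const _).sub continuous_const
  have hFcont : ContinuousOn F (Set.Icc 0 1) := by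
    rw [hF]
    exact ((by fun_prop :
      Continuous fun φ : ℝ => φ * (μd - r) - 1 / 2 * α * φ ^ 2 * σ ^ 2)).continuousOn.add hGcont
  -- concavity of U on [0,∞)
  have hU_ccv : ConcaveOn ℝ (Set.Ici 0) (U α) := by
    have h := (Real.concaveOn_rpow hβ0.le hβ1.le).smul (c := (1 - α)⁻¹) (by positivity)
    have heq : U α = fun x : ℝ => (1 - α)⁻¹ • x ^ (1 - α) := by
      funext x; simp [U, smul_eq_mul, div_eq_inv_mul]
    rw [heq]; exact h
  -- concavity of G on [0,1]
  have hG_ccv : ConcaveOn ℝ (Set.Icc 0 1) G := by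
    refine ⟨convex_Icc _ _, fun x hx y hy a b ha hb hab => ?_⟩
    simp only [smul_eq_mul]
    have hxy : a * x + b * y ∈ Set.Icc (0:ℝ) 1 := by
      have := (convex_Icc (0:ℝ) 1) hx hy ha hb hab
      simpa [smul_eq_mul] using this
    have hix := hInt x hx
    have hiy := hInt y hy
    have hixy := hInt _ hxy
    calc a * G x + b * G y
        = ∫ e, (a * (U α (1 + x * η e) - U α 1) + b * (U α (1 + y * η e) - U α 1)) ∂ν := by
          rw [hG]
          rw [integral_add (hix.const_mul a) (hiy.const_mul b),
            integral_const_mul, integral_const_mul]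
      _ ≤ ∫ e, (U α (1 + (a * x + b * y) * η e) - U α 1) ∂ν := by
          refine integral_mono_ae ((hix.const_mul a).add (hiy.const_mul b)) hixy ?_
          filter_upwards [hbase x hx, hbase y hy] with e hex hey
          have h := hU_ccv.2 (Set.mem_Ici.mpr hex.1) (Set.mem_Ici.mpr hey.1) ha hb hab
          simp only [smul_eq_mul] at h
          have harg : a * (1 + x * η e) + b * (1 + y * η e)
              = 1 + (a * x + b * y) * η e := by linear_combination hab
          rw [harg] at h
          have hone : a * U α 1 + b * U α 1 = U α 1 := by rw [← add_mul, hab, one_mul]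
          nlinarith [h]
      _ = G (a * x + b * y) := rfl
  -- strict concavity of the quadratic part
  have hquad : StrictConcaveOn ℝ (Set.Icc 0 1)
      (fun φ : ℝ => -(1 / 2 * α * σ ^ 2 * φ ^ 2)) := by
    have h1 : StrictConvexOn ℝ (Set.Icc 0 1) (fun φ : ℝ => φ ^ 2) :=
      (strictConvexOn_pow le_rfl).subset Set.Icc_subset_Ici_self (convex_Icc _ _)
    exact (strictConvexOn_const_mul (by positivity) h1).neg
  -- concavity of the linear part
  have hlin : ConcaveOn ℝ (Set.Icc 0 1) (fun φ : ℝ => φ * (μd - r)) :=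
    ⟨convex_Icc _ _, fun x _ y _ a b _ _ _ => by simp only [smul_eq_mul]; nlinarith [sq_nonneg (a+b)]⟩
  -- strict concavity of F
  have hFscc : StrictConcaveOn ℝ (Set.Icc 0 1) F := by
    have h := (hlin.add_strictConcaveOn hquad).add_concaveOn hG_ccv
    have heq : F = ((fun φ : ℝ => φ * (μd - r)) + fun φ : ℝ => -(1 / 2 * α * σ ^ 2 * φ ^ 2)) + G := by
      rw [hF]; funext φ; simp only [Pi.add_apply, hG]; ring
    rw [heq]; exact h
  refine ⟨hInt, hFcont, ?_⟩
  obtain ⟨φs, hφs, hmax⟩ := isCompact_Icc.exists_isMaxOn (Set.nonempty_Icc.mpr zero_le_one) hFcont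
  refine ⟨φs, ⟨hφs, fun φ hφ => hmax hφ⟩, ?_⟩
  rintro ψ ⟨hψmem, hψmax⟩
  exact hFscc.eq_of_isMaxOn (fun x hx => hψmax x hx) hmax hψmem hφs
end

section
/- Let α > 0, α ≠ 1, U(x) = x^{1−α}/(1−α), and fix r, μ_d ∈ ℝ, σ > 0, T > 0. Let ν₀ be a finite measure on a measurable space E₀ and η₀ : E₀ → ℝ measurable with η₀ ≥ −1 ν₀-a.e.; let μ_s be a finite measure on a measurable space Z, let K be a Markov kernel from Z to a measurable space E₁, and let η₁ : E₁ → ℝ be measurable. Let S₀ ⊆ ℝ be nonempty with 1 + φη₀ ≥ 0 ν₀-a.e. for each φ ∈ S₀, and for each z ∈ Z let S(z) ⊆ ℝ be nonempty with 1 + φη₁ ≥ 0 K(z,·)-a.e. for each φ ∈ S(z). Assume: (i) for every φ ∈ S₀ the function e ↦ U(1+φη₀(e)) is ν₀-integrable and M₀ := sup_{φ∈S₀} { φ(μ_d−r) − (1/2)αφ²σ² + ∫_{E₀}(U(1+φη₀(e)) − U(1)) ν₀(de) } is a real number; (ii) for every z and every φ ∈ S(z) the function e ↦ U(1+φη₁(e))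 is K(z,·)-integrable, and the function G(z) := sup_{φ∈S(z)} ∫_{E₁}(U(1+φη₁(e)) − U(1)) K(z,de) is real-valued, measurable and μ_s-integrable. Set M := M₀ + ∫_Z G(z) μ_s(dz) and define v(t,x) := (x^{1−α}/(1−α))·exp((1−α)(r+M)(T−t)). Then v is infinitely differentiable on [0,T] × (0,∞), satisfies the terminal condition v(T,x) = U(x) for all x > 0, and for every (t,x) ∈ [0,T] × (0,∞) the Hamilton-Jacobi-Bellman equation holds: ∂_t v(t,x) + r x ∂_x v(t,x) + sup_{φ∈S₀} { φ x (μ_d−r) ∂_x v(t,x) + (1/2)σ²φ²x² ∂_{xx} v(t,x) + ∫_{E₀} (v(t, x(1+φη₀(e))) − v(t,x)) ν₀(de) } + ∫_Z sup_{φ∈S(z)} ( ∫_{E₁} (v(t, x(1+φη₁(e))) − v(t,x)) K(z,de) ) μ_s(dz) = 0. -/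
open MeasureTheory Real Pointwise

lemma sSup_mul_image' (C : ℝ) (hC : 0 ≤ C) (A : Set ℝ) :
    sSup ((fun y => C * y) '' A) = C * sSup A := by
  have h : (fun y => C * y) '' A = C • A := by
    ext w; simp [Set.mem_smul_set, smul_eq_mul]
  rw [h, Real.sSup_smul_of_nonneg hC, smul_eq_mul]

/-- Verification theorem (analytic part): the candidate value function
`v(t,x) = U(x)·exp((1-α)(r+M)(T-t))` is smooth on `[0,T] × (0,∞)`, satisfies the
terminal condition `v(T,·) = U`, and solves the Hamilton-Jacobi-Bellman equation
with jump signals. -/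
theorem value_function_solves_HJB
    {E₀ Z E₁ : Type*} [MeasurableSpace E₀] [MeasurableSpace Z] [MeasurableSpace E₁]
    (α : ℝ) (hα : 0 < α) (hα1 : α ≠ 1)
    (r μd σ T : ℝ) (hσ : 0 < σ) (hT : 0 < T)
    (ν₀ : Measure E₀) [IsFiniteMeasure ν₀]
    (μs : Measure Z) [IsFiniteMeasure μs]
    (K : ProbabilityTheory.Kernel Z E₁) [ProbabilityTheory.IsMarkovKernel K]
    (η₀ : E₀ → ℝ) (hη₀ : Measurable η₀) (hη₀ge : ∀ᵐ e ∂ν₀, -1 ≤ η₀ e)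
    (η₁ : E₁ → ℝ) (hη₁ : Measurable η₁)
    (S₀ : Set ℝ) (hS₀ : S₀.Nonempty)
    (hS₀adm : ∀ φ ∈ S₀, ∀ᵐ e ∂ν₀, 0 ≤ 1 + φ * η₀ e)
    (S : Z → Set ℝ) (hS : ∀ z, (S z).Nonempty)
    (hSadm : ∀ z, ∀ φ ∈ S z, ∀ᵐ e ∂(K z), 0 ≤ 1 + φ * η₁ e)
    (hint₀ : ∀ φ ∈ S₀, Integrable (fun e => U α (1 + φ * η₀ e)) ν₀)
    (hbdd₀ : BddAbove ((fun φ => φ * (μd - r) - (1 / 2) * α * φ ^ 2 * σ ^ 2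
        + ∫ e, (U α (1 + φ * η₀ e) - U α 1) ∂ν₀) '' S₀))
    (hint₁ : ∀ z, ∀ φ ∈ S z, Integrable (fun e => U α (1 + φ * η₁ e)) (K z))
    (hGbdd : ∀ z, BddAbove ((fun φ => ∫ e, (U α (1 + φ * η₁ e) - U α 1) ∂(K z)) '' S z))
    (G : Z → ℝ)
    (hG : G = fun z => sSup ((fun φ => ∫ e, (U α (1 + φ * η₁ e) - U α 1) ∂(K z)) '' S z))
    (hGmeas : Measurable G) (hGint : Integrable G μs)
    (M₀ M : ℝ)
    (hM₀ : M₀ = sSup ((fun φ => φ * (μd - r) - (1 / 2) * α * φ ^ 2 * σ ^ 2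
        + ∫ e, (U α (1 + φ * η₀ e) - U α 1) ∂ν₀) '' S₀))
    (hM : M = M₀ + ∫ z, G z ∂μs)
    (v : ℝ → ℝ → ℝ)
    (hv : v = fun t x => x ^ (1 - α) / (1 - α) * Real.exp ((1 - α) * (r + M) * (T - t))) :
    ContDiffOn ℝ (⊤ : ℕ∞) (fun p : ℝ × ℝ => v p.1 p.2) (Set.Icc 0 T ×ˢ Set.Ioi 0) ∧
    (∀ x > (0 : ℝ), v T x = U α x) ∧
    (∀ t ∈ Set.Icc (0 : ℝ) T, ∀ x > (0 : ℝ),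
      deriv (fun s => v s x) t + r * x * deriv (fun y => v t y) x
      + sSup ((fun φ => φ * x * (μd - r) * deriv (fun y => v t y) x
          + (1 / 2) * σ ^ 2 * φ ^ 2 * x ^ 2 * deriv (deriv (fun y => v t y)) x
          + ∫ e, (v t (x * (1 + φ * η₀ e)) - v t x) ∂ν₀) '' S₀)
      + ∫ z, sSup ((fun φ => ∫ e, (v t (x * (1 + φ * η₁ e)) - v t x) ∂(K z)) '' S z) ∂μs
      = 0) := by
  have h1α : (1:ℝ) - α ≠ 0 := sub_ne_zero.2 (Ne.symm hα1)
  refine ⟨?_, ?_, ?_⟩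
  · -- smoothness
    rw [hv]
    intro p hp
    have hx : p.2 ≠ 0 := (hp.2 : (0:ℝ) < p.2).ne'
    have hexp : ContDiffAt ℝ (⊤ : ℕ∞) (fun q : ℝ × ℝ =>
        Real.exp ((1 - α) * (r + M) * (T - q.1))) p := by
      exact (Real.contDiff_exp.comp
        (contDiff_const.mul (contDiff_const.sub contDiff_fst))).contDiffAt
    exact ((((Real.contDiffAt_rpow_const_of_ne (p := 1 - α) hx).comp p
      contDiff_snd.contDiffAt).div_const (1 - α)).mul hexp).contDiffWithinAt
  · -- terminal condition
    intro x hx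
    simp [hv, U]
  · -- HJB equation
    intro t ht x hx
    simp only [hv]
    have hx1 : x * x ^ (-α) = x ^ (1 - α) := by
      nth_rewrite 1 [← Real.rpow_one x]
      rw [← Real.rpow_add hx, show (1:ℝ) + -α = 1 - α by ring]
    have hx2 : x ^ 2 * x ^ (-α - 1) = x ^ (1 - α) := by
      rw [← Real.rpow_natCast x 2, ← Real.rpow_add hx,
        show ((2:ℕ):ℝ) + (-α - 1) = 1 - α by push_cast; ring]
    set E : ℝ := Real.exp ((1 - α) * (r + M) * (T - t)) with hE
    have hEpos : 0 < E := Real.exp_pos _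
    have hCpos : 0 < x ^ (1 - α) * E := mul_pos (Real.rpow_pos_of_pos hx _) hEpos
    -- time derivative
    have hvt : deriv (fun s => x ^ (1 - α) / (1 - α) *
        Real.exp ((1 - α) * (r + M) * (T - s))) t
        = -((1 - α) * (r + M)) * (x ^ (1 - α) / (1 - α) * E) := by
      have h1 : HasDerivAt (fun s : ℝ => (1 - α) * (r + M) * (T - s))
          (-((1 - α) * (r + M))) t := by
        simpa using ((hasDerivAt_id t).const_sub T).const_mul ((1 - α) * (r + M))
      have h3 := (h1.exp).const_mul (x ^ (1 - α) / (1 - α))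
      rw [h3.deriv, hE]; ring
    -- space derivative
    have hf : ∀ y : ℝ, 0 < y →
        HasDerivAt (fun y : ℝ => y ^ (1 - α) / (1 - α) * E) (y ^ (-α) * E) y := by
      intro y hy
      have h := ((Real.hasDerivAt_rpow_const (x := y) (p := 1 - α)
        (Or.inl hy.ne')).div_const (1 - α)).mul_const E
      rw [show (1:ℝ) - α - 1 = -α by ring, mul_div_cancel_left₀ _ h1α] at h
      exact h
    have hdx : deriv (fun y : ℝ => y ^ (1 - α) / (1 - α) * E) x = x ^ (-α) * E :=
      (hf x hx).deriv
    have hev : deriv (fun y : ℝ => y ^ (1 - α) / (1 - α) * E)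
        =ᶠ[nhds x] fun y => y ^ (-α) * E :=
      Filter.eventuallyEq_of_mem (Ioi_mem_nhds hx) (fun y hy => (hf y hy).deriv)
    have hdxx : deriv (deriv (fun y : ℝ => y ^ (1 - α) / (1 - α) * E)) x
        = -α * x ^ (-α - 1) * E := by
      rw [hev.deriv_eq]
      exact ((Real.hasDerivAt_rpow_const (x := x) (p := -α)
        (Or.inl hx.ne')).mul_const E).deriv
    -- the S₀ supremum
    have hsup0 : sSup ((fun φ => φ * x * (μd - r) * (x ^ (-α) * E)
          + 1 / 2 * σ ^ 2 * φ ^ 2 * x ^ 2 * (-α * x ^ (-α - 1) * E)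
          + ∫ e, (x * (1 + φ * η₀ e)) ^ (1 - α) / (1 - α) * E
              - x ^ (1 - α) / (1 - α) * E ∂ν₀) '' S₀)
        = x ^ (1 - α) * E * M₀ := by
      have himg : (fun φ => φ * x * (μd - r) * (x ^ (-α) * E)
          + 1 / 2 * σ ^ 2 * φ ^ 2 * x ^ 2 * (-α * x ^ (-α - 1) * E)
          + ∫ e, (x * (1 + φ * η₀ e)) ^ (1 - α) / (1 - α) * E
              - x ^ (1 - α) / (1 - α) * E ∂ν₀) '' S₀
          = (fun y => (x ^ (1 - α) * E) * y) '' ((fun φ => φ * (μd - r)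
              - 1 / 2 * α * φ ^ 2 * σ ^ 2
              + ∫ e, (U α (1 + φ * η₀ e) - U α 1) ∂ν₀) '' S₀) := by
        rw [Set.image_image]
        apply Set.image_congr
        intro φ hφ
        have hI : (∫ e, (x * (1 + φ * η₀ e)) ^ (1 - α) / (1 - α) * E
              - x ^ (1 - α) / (1 - α) * E ∂ν₀)
            = (x ^ (1 - α) * E) * ∫ e, (U α (1 + φ * η₀ e) - U α 1) ∂ν₀ := by
          rw [← integral_const_mul]
          refine integral_congr_ae ?_
          filter_upwards [hS₀adm φ hφ] with e he
          rw [Real.mul_rpow hx.le he]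
          simp only [U, Real.one_rpow]
          ring
        rw [hI]
        linear_combination (φ * (μd - r) * E) * hx1
          - (1 / 2 * σ ^ 2 * φ ^ 2 * α * E) * hx2
      rw [himg, sSup_mul_image' _ hCpos.le, ← hM₀]
    -- the signal suprema
    have hsupz : ∀ z, sSup ((fun φ => ∫ e, (x * (1 + φ * η₁ e)) ^ (1 - α) / (1 - α) * E
          - x ^ (1 - α) / (1 - α) * E ∂(K z)) '' S z)
        = x ^ (1 - α) * E * G z := by
      intro z
      have himg : (fun φ => ∫ e, (x * (1 + φ * η₁ e)) ^ (1 - α) / (1 - α) * E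
            - x ^ (1 - α) / (1 - α) * E ∂(K z)) '' S z
          = (fun y => (x ^ (1 - α) * E) * y) ''
            ((fun φ => ∫ e, (U α (1 + φ * η₁ e) - U α 1) ∂(K z)) '' S z) := by
        rw [Set.image_image]
        apply Set.image_congr
        intro φ hφ
        rw [← integral_const_mul]
        refine integral_congr_ae ?_
        filter_upwards [hSadm z φ hφ] with e he
        rw [Real.mul_rpow hx.le he]
        simp only [U, Real.one_rpow]
        ring
      rw [himg, sSup_mul_image' _ hCpos.le]
      simp only [hG]
    have hintZ : (∫ z, sSup ((fun φ => ∫ e, (x * (1 + φ * η₁ e)) ^ (1 - α) / (1 - α) * E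
          - x ^ (1 - α) / (1 - α) * E ∂(K z)) '' S z) ∂μs)
        = x ^ (1 - α) * E * ∫ z, G z ∂μs := by
      simp only [hsupz]
      rw [integral_const_mul]
    rw [hvt, hdx, hdxx, hsup0, hintZ]
    have e1 : ((1 - α) * (r + M)) * (x ^ (1 - α) / (1 - α) * E)
        = (r + M) * (x ^ (1 - α) * E) := by
      rw [show ((1 - α) * (r + M)) * (x ^ (1 - α) / (1 - α) * E)
        = (r + M) * (x ^ (1 - α) * E) * ((1 - α) / (1 - α)) by ring,
        div_self h1α, mul_one]
    linear_combination (r * E) * hx1 - e1 - (x ^ (1 - α) * E) * hM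
end

section
/- Let m ∈ ℝ, s > 0, let γ = N_{m,s}, let σ̂ > 0 and c ∈ ℝ, and define η(x) = exp(σ̂x + c) − 1. Then the set {φ ∈ ℝ : 1 + φ·η(x) ≥ 0 for γ-a.e. x} equals the closed interval [0, 1]. -/
open MeasureTheory ProbabilityTheory
open scoped NNReal

/-- For lognormal jumps `η(x) = exp(σ̂x + c) - 1` with Gaussian marks, the set of
investment fractions keeping wealth nonnegative across jumps is exactly `[0,1]`. -/
theorem admissible_set_eq_unit_interval_gaussian
    (m : ℝ) (s : ℝ≥0) (hs : 0 < s) (σh : ℝ) (hσh : 0 < σh) (c : ℝ) :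
    {φ : ℝ | ∀ᵐ x ∂(gaussianReal m s), 0 ≤ 1 + φ * (Real.exp (σh * x + c) - 1)} =
      Set.Icc 0 1 := by
  have hvac := gaussianReal_absolutelyContinuous' m (v := s) hs.ne'
  have hpos : ∀ (S : Set ℝ), (volume S ≠ 0) → gaussianReal m s S ≠ 0 := by
    intro S hS h0
    exact hS (hvac h0)
  ext φ
  simp only [Set.mem_setOf_eq, Set.mem_Icc]
  constructor
  · intro h
    constructor
    · by_contra hφ
      push_neg at hφ
      -- φ < 0 : fails for large x
      set x₀ := (Real.log (1 + 1 / (-φ)) - c) / σh with hx₀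
      have hbad : Set.Ioi x₀ ⊆ {x | ¬ (0 ≤ 1 + φ * (Real.exp (σh * x + c) - 1))} := by
        intro x hx
        simp only [Set.mem_setOf_eq, not_le]
        have h1 : Real.log (1 + 1 / (-φ)) < σh * x + c := by
          have : Real.log (1 + 1 / (-φ)) - c < σh * x := by
            rw [← div_lt_iff₀' hσh]; exact hx
          linarith
        have hφ' : 0 < -φ := by linarith
        have hinv : 0 < 1 / (-φ) := by positivity
        have h2 : 1 + 1 / (-φ) < Real.exp (σh * x + c) := by
          calc 1 + 1 / (-φ) ≤ Real.exp (Real.log (1 + 1 / (-φ))) := by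
                rw [Real.exp_log (by linarith)]
            _ < Real.exp (σh * x + c) := Real.exp_lt_exp.2 h1
        have : 1 / (-φ) < Real.exp (σh * x + c) - 1 := by linarith
        have := (div_lt_iff₀ hφ').1 this
        nlinarith [this]
      have h0 : gaussianReal m s {x | ¬ (0 ≤ 1 + φ * (Real.exp (σh * x + c) - 1))} = 0 := by
        exact ae_iff.1 h
      have : gaussianReal m s (Set.Ioi x₀) = 0 :=
        measure_mono_null hbad h0
      exact hpos (Set.Ioi x₀) (by simp) this
    · by_contra hφ
      push_neg at hφ
      have hφ0 : 0 < φ := by linarith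
      -- φ > 1 : fails for very negative x
      set x₀ := (Real.log (1 - 1 / φ) - c) / σh with hx₀
      have hbad : Set.Iio x₀ ⊆ {x | ¬ (0 ≤ 1 + φ * (Real.exp (σh * x + c) - 1))} := by
        intro x hx
        simp only [Set.mem_setOf_eq, not_le]
        have hlt : 1 / φ < 1 := by
          rw [div_lt_one hφ0]; linarith
        have hgt : 0 < 1 - 1 / φ := by linarith
        have h1 : σh * x + c < Real.log (1 - 1 / φ) := by
          have : σh * x < Real.log (1 - 1 / φ) - c := by
            rw [← lt_div_iff₀' hσh]; exact hx
          linarith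
        have h2 : Real.exp (σh * x + c) < 1 - 1 / φ := by
          calc Real.exp (σh * x + c) < Real.exp (Real.log (1 - 1 / φ)) := Real.exp_lt_exp.2 h1
            _ = 1 - 1 / φ := Real.exp_log hgt
        have : Real.exp (σh * x + c) - 1 < - (1 / φ) := by linarith
        have := (lt_div_iff₀ hφ0).1 (show Real.exp (σh * x + c) - 1 < (-1) / φ by rw [neg_div]; linarith)
        nlinarith [this]
      have h0 : gaussianReal m s {x | ¬ (0 ≤ 1 + φ * (Real.exp (σh * x + c) - 1))} = 0 := by
        exact ae_iff.1 h
      have : gaussianReal m s (Set.Iio x₀) = 0 :=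
        measure_mono_null hbad h0
      exact hpos (Set.Iio x₀) (by simp) this
  · rintro ⟨h0, h1⟩
    filter_upwards with x
    have := Real.exp_pos (σh * x + c)
    nlinarith
end

section
/- Let α > 0 with α ≠ 1, σ̂ > 0, c ∈ ℝ, m ∈ ℝ, s > 0 and γ = N_{m,s}. Define F(φ) = (1/(1−α)) ∫_ℝ ((1 + φ(exp(σ̂x + c) − 1))^{1−α} − 1) γ(dx). Then F is real-valued and continuous on [0, 1], and there exists a unique φ* ∈ [0, 1] with F(φ*) = max_{φ∈[0,1]} F(φ). -/
open MeasureTheory ProbabilityTheory Real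
open scoped NNReal ENNReal

lemma integrable_exp_mul_gaussianReal' (m : ℝ) {s : ℝ≥0} (hs : s ≠ 0) (t : ℝ) :
    Integrable (fun x => Real.exp (t * x)) (gaussianReal m s) := by
  rw [gaussianReal_of_var_ne_zero _ hs,
    integrable_withDensity_iff (measurable_gaussianPDF _ _)
      (Filter.Eventually.of_forall fun x => ENNReal.ofReal_lt_top)]
  have hs' : (0:ℝ) < s := lt_of_le_of_ne s.coe_nonneg (by exact_mod_cast hs.symm)
  have heq : (fun x => Real.exp (t * x) * (gaussianPDF m s x).toReal)
      = fun x => Real.exp (t*m + t^2*s/2) * gaussianPDFReal (m + t*s) s x := by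
    ext x
    rw [gaussianPDF, ENNReal.toReal_ofReal (gaussianPDFReal_nonneg _ _ _)]
    simp only [gaussianPDFReal]
    rw [mul_left_comm, mul_left_comm (Real.exp _), ← Real.exp_add, ← Real.exp_add]
    congr 2
    field_simp
    ring
  rw [heq]
  exact (integrable_gaussianPDFReal _ _).const_mul _

lemma strictConcaveOn_crra {α : ℝ} (hα : 0 < α) (hα1 : α ≠ 1) :
    StrictConcaveOn ℝ (Set.Ioi (0:ℝ))
      (fun t : ℝ => (1/(1-α)) * (t ^ (1-α) - 1)) := by
  set p : ℝ := 1 - α with hp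
  have hp0 : p ≠ 0 := sub_ne_zero.2 (Ne.symm hα1)
  have hderiv : ∀ x ∈ Set.Ioi (0:ℝ),
      HasDerivAt (fun t : ℝ => (1/p) * (t ^ p - 1)) (x ^ (p-1)) x := by
    intro x hx
    have h := ((Real.hasDerivAt_rpow_const (x := x) (p := p)
      (Or.inl (ne_of_gt hx))).sub_const 1).const_mul (1/p)
    refine h.congr_deriv ?_
    field_simp
  refine strictConcaveOn_of_deriv2_neg (convex_Ioi 0) ?_ ?_
  · exact continuousOn_const.mul
      ((ContinuousOn.rpow_const continuousOn_id
        (fun x hx => Or.inl (ne_of_gt hx))).sub continuousOn_const)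
  · intro x hx
    rw [interior_Ioi] at hx
    have hEq : deriv (fun t : ℝ => (1/p) * (t ^ p - 1)) =ᶠ[nhds x]
        (fun t : ℝ => t ^ (p-1)) := by
      filter_upwards [IsOpen.mem_nhds isOpen_Ioi hx] with t ht
      exact (hderiv t ht).deriv
    have h2 : deriv^[2] (fun t : ℝ => (1/p) * (t ^ p - 1)) x
        = (p-1) * x ^ (p-2) := by
      show deriv (deriv _) x = _
      rw [hEq.deriv_eq, Real.deriv_rpow_const]
      norm_num [sub_sub]
    rw [h2]
    have : p - 1 < 0 := by simp only [hp]; linarith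
    exact mul_neg_of_neg_of_pos this (Real.rpow_pos_of_pos hx _)

/-- The conditional expected utility increment
`F(φ) = (1/(1-α)) ∫ ((1 + φ(exp(σ̂x + c) - 1))^(1-α) - 1) dN(m,s)` is real-valued
(its integrand is integrable) and continuous on `[0,1]`, and it has a unique
maximizer `φ* ∈ [0,1]`. -/
theorem exists_unique_maximizer_signal_gaussian
    (α : ℝ) (hα : 0 < α) (hα1 : α ≠ 1) (σh c m : ℝ) (hσh : 0 < σh)
    (s : ℝ≥0) (hs : 0 < s)
    (F : ℝ → ℝ)
    (hF : F = fun φ => (1 / (1 - α)) *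
        ∫ x, ((1 + φ * (Real.exp (σh * x + c) - 1)) ^ (1 - α) - 1) ∂(gaussianReal m s)) :
    (∀ φ ∈ Set.Icc (0 : ℝ) 1,
      Integrable (fun x => (1 + φ * (Real.exp (σh * x + c) - 1)) ^ (1 - α) - 1)
        (gaussianReal m s)) ∧
    ContinuousOn F (Set.Icc 0 1) ∧
    ∃! φs : ℝ, φs ∈ Set.Icc (0 : ℝ) 1 ∧ ∀ φ ∈ Set.Icc (0 : ℝ) 1, F φ ≤ F φs := by
  have hs0 : s ≠ 0 := hs.ne'
  set p : ℝ := 1 - α with hpdef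
  have hp0 : p ≠ 0 := sub_ne_zero.2 (Ne.symm hα1)
  set γ : Measure ℝ := gaussianReal m s with hγ
  have hprob : IsProbabilityMeasure γ := by rw [hγ]; infer_instance
  set g : ℝ → ℝ → ℝ := fun φ x => 1 + φ * (Real.exp (σh * x + c) - 1) with hg
  -- positivity of the base
  have hpos : ∀ φ ∈ Set.Icc (0:ℝ) 1, ∀ x : ℝ, 0 < g φ x := by
    rintro φ ⟨h0, h1⟩ x
    have hE : 0 < Real.exp (σh * x + c) := Real.exp_pos _
    show 0 < 1 + φ * (Real.exp (σh * x + c) - 1)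
    rcases eq_or_lt_of_le h0 with h | h
    · simp [← h]
    · nlinarith [mul_pos h hE]
  -- uniform bound
  set bound : ℝ → ℝ := fun x => 2 + Real.exp (p*c) * Real.exp ((p*σh) * x) with hbnd
  have hEp : ∀ x : ℝ, Real.exp (σh * x + c) ^ p
      = Real.exp (p*c) * Real.exp ((p*σh) * x) := by
    intro x
    rw [← Real.exp_mul, ← Real.exp_add]
    ring_nf
  have hle : ∀ φ ∈ Set.Icc (0:ℝ) 1, ∀ x : ℝ, ‖g φ x ^ p - 1‖ ≤ bound x := by
    rintro φ ⟨h0, h1⟩ x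
    set E : ℝ := Real.exp (σh * x + c) with hE
    have hEpos : 0 < E := Real.exp_pos _
    have hgpos : 0 < g φ x := hpos φ ⟨h0, h1⟩ x
    have hgx : g φ x = 1 + φ * (E - 1) := rfl
    have hEppos : 0 < E ^ p := Real.rpow_pos_of_pos hEpos _
    have key : g φ x ^ p ≤ 1 + E ^ p := by
      rcases le_total E 1 with hE1 | hE1
      · rcases lt_or_ge 0 p with hp | hp
        · have hgle : g φ x ≤ 1 := by
            nlinarith [mul_nonneg h0 (by linarith : (0:ℝ) ≤ 1 - E)]
          have := Real.rpow_le_rpow hgpos.le hgle hp.le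
          rw [Real.one_rpow] at this
          linarith
        · have hgge : E ≤ g φ x := by
            nlinarith [mul_nonneg (by linarith : (0:ℝ) ≤ 1 - φ)
              (by linarith : (0:ℝ) ≤ 1 - E)]
          have := Real.rpow_le_rpow_of_nonpos hEpos hgge hp
          linarith
      · rcases lt_or_ge 0 p with hp | hp
        · have hgle : g φ x ≤ E := by
            nlinarith [mul_nonneg (by linarith : (0:ℝ) ≤ 1 - φ)
              (by linarith : (0:ℝ) ≤ E - 1)]
          have := Real.rpow_le_rpow hgpos.le hgle hp.le
          linarith
        · have hgge : (1:ℝ) ≤ g φ x := by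
            nlinarith [mul_nonneg h0 (by linarith : (0:ℝ) ≤ E - 1)]
          have := Real.rpow_le_rpow_of_nonpos one_pos hgge hp
          rw [Real.one_rpow] at this
          linarith
    have hnn : 0 ≤ g φ x ^ p := Real.rpow_nonneg hgpos.le _
    have hBx : bound x = 2 + E ^ p := by
      show 2 + Real.exp (p*c) * Real.exp ((p*σh) * x) = 2 + E ^ p
      rw [hE, hEp x]
    rw [Real.norm_eq_abs, hBx, abs_sub_le_iff]
    constructor <;> linarith
  have hbound_int : Integrable bound γ :=
    (integrable_const (2:ℝ)).add
      ((integrable_exp_mul_gaussianReal' m hs0 (p*σh)).const_mul _)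
  -- continuity in x
  have hcont_x : ∀ φ ∈ Set.Icc (0:ℝ) 1,
      Continuous (fun x => g φ x ^ p - 1) := by
    intro φ hφ
    have hb : Continuous (fun x => g φ x) := by
      simp only [hg]; fun_prop
    exact (hb.rpow_const (fun x => Or.inl (hpos φ hφ x).ne')).sub continuous_const
  -- (1) integrability
  have hInt : ∀ φ ∈ Set.Icc (0:ℝ) 1,
      Integrable (fun x => g φ x ^ p - 1) γ := by
    intro φ hφ
    exact Integrable.mono' hbound_int (hcont_x φ hφ).aestronglyMeasurable
      (Filter.Eventually.of_forall (hle φ hφ))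
  -- (2) continuity of F
  have hFc : ContinuousOn F (Set.Icc 0 1) := by
    rw [hF]
    refine continuousOn_const.mul ?_
    refine continuousOn_of_dominated (bound := bound)
      (fun φ hφ => (hcont_x φ hφ).aestronglyMeasurable)
      (fun φ hφ => Filter.Eventually.of_forall (hle φ hφ)) hbound_int ?_
    refine Filter.Eventually.of_forall fun x => ?_
    have hb : ContinuousOn (fun φ => g φ x) (Set.Icc 0 1) := by
      simp only [hg]; fun_prop
    exact (hb.rpow_const (fun φ hφ => Or.inl (hpos φ hφ x).ne')).sub continuousOn_const
  -- rewrite F as integral of CRRA utility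
  have hFrw : ∀ φ : ℝ, F φ = ∫ x, (1/p) * (g φ x ^ p - 1) ∂γ := by
    intro φ
    rw [hF, integral_const_mul]
  -- (3) strict concavity
  have hu := strictConcaveOn_crra hα hα1
  rw [← hpdef] at hu
  have hconc : StrictConcaveOn ℝ (Set.Icc (0:ℝ) 1) F := by
    refine ⟨convex_Icc 0 1, ?_⟩
    intro x1 hx1 x2 hx2 hne a b ha hb hab
    have hmid : a • x1 + b • x2 ∈ Set.Icc (0:ℝ) 1 :=
      (convex_Icc 0 1) hx1 hx2 ha.le hb.le hab
    set f1 : ℝ → ℝ := fun x => (1/p) * (g x1 x ^ p - 1) with hf1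
    set f2 : ℝ → ℝ := fun x => (1/p) * (g x2 x ^ p - 1) with hf2
    set fm : ℝ → ℝ := fun x => (1/p) * (g (a • x1 + b • x2) x ^ p - 1) with hfm
    have hif1 : Integrable f1 γ := (hInt x1 hx1).const_mul _
    have hif2 : Integrable f2 γ := (hInt x2 hx2).const_mul _
    have hifm : Integrable fm γ := (hInt _ hmid).const_mul _
    set D : ℝ → ℝ := fun x => fm x - (a * f1 x + b * f2 x) with hD
    have hgmid : ∀ x, g (a • x1 + b • x2) x = a * g x1 x + b * g x2 x := by
      intro x
      simp only [hg, smul_eq_mul]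
      linear_combination (-1 : ℝ) * hab
    have hDnn : ∀ x, 0 ≤ D x := by
      intro x
      have h := hu.concaveOn.2 (Set.mem_Ioi.2 (hpos x1 hx1 x))
        (Set.mem_Ioi.2 (hpos x2 hx2 x)) ha.le hb.le hab
      simp only [smul_eq_mul] at h
      simp only [hD, hfm, hf1, hf2, hgmid x]
      linarith
    have hDpos : ∀ x, σh * x + c ≠ 0 → 0 < D x := by
      intro x hx
      have hgne : g x1 x ≠ g x2 x := by
        simp only [hg]
        intro hcontra
        have hE1 : Real.exp (σh * x + c) ≠ 1 := by
          rw [← Real.exp_zero]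
          exact fun h => hx (Real.exp_injective h)
        have hz : (x1 - x2) * (Real.exp (σh * x + c) - 1) = 0 := by linarith
        rcases mul_eq_zero.1 hz with h | h
        · exact hne (by linarith)
        · exact hE1 (by linarith)
      have h := hu.2 (Set.mem_Ioi.2 (hpos x1 hx1 x))
        (Set.mem_Ioi.2 (hpos x2 hx2 x)) hgne ha hb hab
      simp only [smul_eq_mul] at h
      simp only [hD, hfm, hf1, hf2, hgmid x]
      linarith
    have hsum : Integrable (fun x => a * f1 x + b * f2 x) γ :=
      (hif1.const_mul a).add (hif2.const_mul b)
    have hDint : Integrable D γ := hifm.sub hsum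
    have hsupp : 0 < ∫ x, D x ∂γ := by
      rw [integral_pos_iff_support_of_nonneg (fun x => hDnn x) hDint]
      have hsub : ({(-c/σh)}ᶜ : Set ℝ) ⊆ Function.support D := by
        intro x hx
        have hxne : σh * x + c ≠ 0 := by
          intro h
          exact hx (Set.mem_singleton_iff.2 (by field_simp; linarith))
        exact (hDpos x hxne).ne'
      have h0 : γ {(-c/σh)} = 0 := by
        rw [hγ]
        exact gaussianReal_absolutelyContinuous m hs0 Real.volume_singleton
      have h1 : γ ({(-c/σh)}ᶜ : Set ℝ) = 1 := by
        rw [prob_compl_eq_one_sub (measurableSet_singleton _), h0]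
        simp
      calc (0:ℝ≥0∞) < 1 := one_pos
        _ = γ ({(-c/σh)}ᶜ : Set ℝ) := h1.symm
        _ ≤ γ (Function.support D) := measure_mono hsub
    have hint_eq : ∫ x, D x ∂γ
        = (∫ x, fm x ∂γ) - (a * ∫ x, f1 x ∂γ + b * ∫ x, f2 x ∂γ) := by
      simp only [hD]
      rw [integral_sub hifm hsum,
        integral_add (hif1.const_mul a) (hif2.const_mul b)]
      simp only [integral_const_mul]
    have hF1 : F x1 = ∫ x, f1 x ∂γ := hFrw x1
    have hF2 : F x2 = ∫ x, f2 x ∂γ := hFrw x2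
    have hFm : F (a • x1 + b • x2) = ∫ x, fm x ∂γ := hFrw _
    rw [smul_eq_mul, smul_eq_mul, hF1, hF2, hFm]
    rw [hint_eq] at hsupp
    linarith
  refine ⟨fun φ hφ => hInt φ hφ, hFc, ?_⟩
  obtain ⟨φs, hφs, hmax⟩ := isCompact_Icc.exists_isMaxOn
    (Set.nonempty_Icc.2 zero_le_one) hFc
  refine ⟨φs, ⟨hφs, fun φ hφ => hmax hφ⟩, ?_⟩
  rintro y ⟨hy, hymax⟩
  exact hconc.eq_of_isMaxOn (fun z hz => hymax z hz) hmax hy hφs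
end

section
/- Let α ∈ (0,1), σ̂ > 0, c ∈ ℝ and ρ ∈ (−1, 1). Then the function z ↦ sup_{φ∈[0,1]} ∫_ℝ ((1 + φ(exp(σ̂y + c) − 1))^{1−α} − 1) N_{ρz, 1−ρ²}(dy) is real-valued and continuous on ℝ; in particular it is Borel measurable. -/
open MeasureTheory ProbabilityTheory Real
open scoped NNReal

private lemma aux_integrable_exp_quadratic {b : ℝ} (hb : 0 < b) (t : ℝ) :
    Integrable fun x : ℝ => Real.exp (-b * x ^ 2 + t * x) := by
  have h := (integrable_cexp_quadratic (b := (b : ℂ)) (by simpa using hb) (t : ℂ) 0).norm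
  have heq : (fun x : ℝ => ‖Complex.exp (-(b : ℂ) * (x : ℂ) ^ 2 + (t : ℂ) * (x : ℂ) + 0)‖)
      = fun x : ℝ => Real.exp (-b * x ^ 2 + t * x) := by
    funext x
    rw [Complex.norm_exp]
    have hcast : (-(b : ℂ) * (x : ℂ) ^ 2 + (t : ℂ) * (x : ℂ) + 0)
        = ((-b * x ^ 2 + t * x : ℝ) : ℂ) := by push_cast; ring
    rw [hcast, Complex.ofReal_re]
  rwa [heq] at h

private lemma aux_integrable_exp_gaussian (t : ℝ) {v : ℝ≥0} (hv : v ≠ 0) :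
    Integrable (fun y => Real.exp (t * y)) (gaussianReal 0 v) := by
  have hv' : (0 : ℝ) < v := by positivity
  rw [gaussianReal_of_var_ne_zero _ hv,
    integrable_withDensity_iff (measurable_gaussianPDF _ _)
      (ae_of_all _ fun x => ENNReal.ofReal_lt_top)]
  have hpdf : ∀ x : ℝ, ((gaussianPDF 0 v x).toReal)
      = (√(2 * π * v))⁻¹ * Real.exp (-(x - 0) ^ 2 / (2 * v)) := fun x => by
    rw [gaussianPDF, ENNReal.toReal_ofReal (gaussianPDFReal_nonneg _ _ _)]
    rfl
  simp only [hpdf]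
  have h := (aux_integrable_exp_quadratic (b := (2 * (v : ℝ))⁻¹) (by positivity) t).const_mul
    ((√(2 * π * v))⁻¹)
  have heq : (fun x : ℝ => (√(2 * π * v))⁻¹ * Real.exp (-(2 * (v : ℝ))⁻¹ * x ^ 2 + t * x))
      = fun x : ℝ => Real.exp (t * x) * ((√(2 * π * v))⁻¹ * Real.exp (-(x - 0) ^ 2 / (2 * v))) := by
    funext x
    rw [mul_left_comm, ← Real.exp_add]
    congr 2
    field_simp
    ring
  rwa [heq] at h

/-- The optimal conditional expected utility increment, as a function of the signal
value `z`, is real-valued (the supremum is over a nonempty set bounded above) and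
continuous on `ℝ`; in particular it is Borel measurable. -/
theorem optimal_conditional_utility_continuous
    (α : ℝ) (hα : α ∈ Set.Ioo (0 : ℝ) 1) (σh c : ℝ) (hσh : 0 < σh)
    (ρ : ℝ) (hρ : ρ ∈ Set.Ioo (-1 : ℝ) 1)
    (g : ℝ → ℝ)
    (hg : g = fun z => sSup ((fun φ =>
        ∫ y, ((1 + φ * (Real.exp (σh * y + c) - 1)) ^ (1 - α) - 1)
          ∂(gaussianReal (ρ * z) (Real.toNNReal (1 - ρ ^ 2)))) '' Set.Icc (0 : ℝ) 1)) :
    (∀ z : ℝ, BddAbove ((fun φ =>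
        ∫ y, ((1 + φ * (Real.exp (σh * y + c) - 1)) ^ (1 - α) - 1)
          ∂(gaussianReal (ρ * z) (Real.toNNReal (1 - ρ ^ 2)))) '' Set.Icc (0 : ℝ) 1)) ∧
    Continuous g ∧ Measurable g := by
  obtain ⟨hα0, hα1⟩ := hα
  obtain ⟨hρ1, hρ2⟩ := hρ
  have h1α : (0 : ℝ) < 1 - α := by linarith
  have hvpos : (0 : ℝ) < 1 - ρ ^ 2 := by nlinarith
  set v : ℝ≥0 := Real.toNNReal (1 - ρ ^ 2) with hv_def
  have hv : v ≠ 0 := by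
    simp only [hv_def, ne_eq, Real.toNNReal_eq_zero, not_le]
    linarith
  -- the shifted integrand
  set G : ℝ × ℝ → ℝ → ℝ := fun p y =>
    (1 + p.2 * (Real.exp (σh * (y + ρ * p.1) + c) - 1)) ^ (1 - α) - 1 with hG_def
  have hrpow : Continuous fun b : ℝ => b ^ (1 - α) :=
    continuous_iff_continuousAt.2 fun b => Real.continuousAt_rpow_const b _ (Or.inr h1α.le)
  have hGcont : Continuous fun q : (ℝ × ℝ) × ℝ => G q.1 q.2 := by
    apply Continuous.sub _ continuous_const
    exact hrpow.comp (by fun_prop)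
  -- change of variables
  have key : ∀ p : ℝ × ℝ,
      (∫ y, ((1 + p.2 * (Real.exp (σh * y + c) - 1)) ^ (1 - α) - 1)
        ∂(gaussianReal (ρ * p.1) v)) = ∫ y, G p y ∂(gaussianReal 0 v) := by
    intro p
    have hmap : gaussianReal (ρ * p.1) v = (gaussianReal 0 v).map (· + ρ * p.1) := by
      rw [gaussianReal_map_add_const, zero_add]
    have hAESM : AEStronglyMeasurable
        (fun y => (1 + p.2 * (Real.exp (σh * y + c) - 1)) ^ (1 - α) - 1)
        ((gaussianReal 0 v).map (· + ρ * p.1)) := by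
      apply Continuous.aestronglyMeasurable
      exact (hrpow.comp (by fun_prop)).sub continuous_const
    rw [hmap, integral_map (by fun_prop) hAESM]
  -- joint continuity of the integral
  have hHcont : Continuous fun p : ℝ × ℝ => ∫ y, G p y ∂(gaussianReal 0 v) := by
    rw [continuous_iff_continuousAt]
    intro p₀
    set B : ℝ := |p₀.2| + 1 with hB_def
    set D : ℝ := Real.exp (σh * (|ρ| * (|p₀.1| + 1)) + c) with hD_def
    have hB1 : (1 : ℝ) ≤ B := by simp [hB_def]
    have hD0 : 0 < D := Real.exp_pos _
    apply continuousAt_of_dominated (bound := fun y => (1 + B) * (1 + D * Real.exp (σh * y)) + 1)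
    · exact Filter.Eventually.of_forall fun p =>
        (hGcont.comp (Continuous.prodMk_right p)).aestronglyMeasurable
    · filter_upwards [Metric.closedBall_mem_nhds p₀ one_pos] with p hp
      apply ae_of_all
      intro y
      rw [Metric.mem_closedBall, Prod.dist_eq] at hp
      have hd1 : |p.1 - p₀.1| ≤ 1 := by
        have := le_trans (le_max_left _ _) hp
        rwa [Real.dist_eq] at this
      have hd2 : |p.2 - p₀.2| ≤ 1 := by
        have := le_trans (le_max_right _ _) hp
        rwa [Real.dist_eq] at this
      have hφ : |p.2| ≤ B := by
        have := abs_sub_abs_le_abs_sub p.2 p₀.2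
        simp only [hB_def]; linarith
      have hz : |p.1| ≤ |p₀.1| + 1 := by
        have := abs_sub_abs_le_abs_sub p.1 p₀.1
        linarith
      set E : ℝ := Real.exp (σh * (y + ρ * p.1) + c) with hE_def
      have hE0 : 0 < E := Real.exp_pos _
      have hE : E ≤ D * Real.exp (σh * y) := by
        rw [hE_def, hD_def, ← Real.exp_add]
        apply Real.exp_le_exp.2
        have h1 : ρ * p.1 ≤ |ρ| * (|p₀.1| + 1) := by
          calc ρ * p.1 ≤ |ρ * p.1| := le_abs_self _
            _ = |ρ| * |p.1| := abs_mul _ _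
            _ ≤ |ρ| * (|p₀.1| + 1) := by
                apply mul_le_mul_of_nonneg_left hz (abs_nonneg _)
        nlinarith [mul_le_mul_of_nonneg_left h1 hσh.le]
      have hbase : |1 + p.2 * (E - 1)| ≤ (1 + B) * (1 + E) := by
        calc |1 + p.2 * (E - 1)| ≤ 1 + |p.2| * |E - 1| := by
              refine le_trans (abs_add_le _ _) ?_
              simp [abs_mul]
          _ ≤ 1 + B * (E + 1) := by
              have h2 : |E - 1| ≤ E + 1 := by
                rw [abs_le]; constructor <;> linarith
              have h3 : (0 : ℝ) ≤ |p.2| := abs_nonneg _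
              nlinarith
          _ ≤ (1 + B) * (1 + E) := by nlinarith
      have hone : (1 : ℝ) ≤ (1 + B) * (1 + E) := by nlinarith
      calc ‖G p y‖ = |(1 + p.2 * (E - 1)) ^ (1 - α) - 1| := rfl
        _ ≤ |(1 + p.2 * (E - 1)) ^ (1 - α)| + 1 := by
            refine le_trans (abs_sub _ _) ?_; simp
        _ ≤ |1 + p.2 * (E - 1)| ^ (1 - α) + 1 := by
            have := Real.abs_rpow_le_abs_rpow (1 + p.2 * (E - 1)) (1 - α)
            linarith
        _ ≤ ((1 + B) * (1 + E)) ^ (1 - α) + 1 := by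
            have := Real.rpow_le_rpow (abs_nonneg _) hbase h1α.le
            linarith
        _ ≤ (1 + B) * (1 + E) + 1 := by
            have := Real.rpow_le_rpow_of_exponent_le hone (by linarith : 1 - α ≤ 1)
            rw [Real.rpow_one] at this
            linarith
        _ ≤ (1 + B) * (1 + D * Real.exp (σh * y)) + 1 := by
            have : (0 : ℝ) ≤ 1 + B := by linarith
            nlinarith
    · apply Integrable.add _ (integrable_const 1)
      apply Integrable.const_mul
      exact (integrable_const 1).add ((aux_integrable_exp_gaussian σh hv).const_mul D)
    · apply ae_of_all
      intro y
      exact (hGcont.comp (continuous_id.prodMk continuous_const)).continuousAt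
  -- pointwise equality of the two families of functions
  have himg : ∀ z : ℝ, (fun φ =>
      ∫ y, ((1 + φ * (Real.exp (σh * y + c) - 1)) ^ (1 - α) - 1)
        ∂(gaussianReal (ρ * z) v)) = fun φ => ∫ y, G (z, φ) y ∂(gaussianReal 0 v) := by
    intro z
    funext φ
    exact key (z, φ)
  refine ⟨?_, ?_, ?_⟩
  · intro z
    rw [himg z]
    exact (isCompact_Icc.image (hHcont.comp (Continuous.prodMk_right z))).bddAbove
  · rw [hg]
    have heq : (fun z => sSup ((fun φ =>
        ∫ y, ((1 + φ * (Real.exp (σh * y + c) - 1)) ^ (1 - α) - 1)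
          ∂(gaussianReal (ρ * z) v)) '' Set.Icc (0 : ℝ) 1))
        = fun z => sSup ((fun φ => ∫ y, G (z, φ) y ∂(gaussianReal 0 v)) '' Set.Icc (0 : ℝ) 1) := by
      funext z
      rw [himg z]
    rw [heq]
    exact isCompact_Icc.continuous_sSup hHcont
  · rw [hg]
    have heq : (fun z => sSup ((fun φ =>
        ∫ y, ((1 + φ * (Real.exp (σh * y + c) - 1)) ^ (1 - α) - 1)
          ∂(gaussianReal (ρ * z) v)) '' Set.Icc (0 : ℝ) 1))
        = fun z => sSup ((fun φ => ∫ y, G (z, φ) y ∂(gaussianReal 0 v)) '' Set.Icc (0 : ℝ) 1) := by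
      funext z
      rw [himg z]
    rw [heq]
    exact (isCompact_Icc.continuous_sSup hHcont).measurable
end
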